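/- Let P ∈ ℝ^{d×n} be a Haar–Stiefel matrix with 3 ≤ d < n, and let u, v ∈ ℝⁿ be unit vectors with ρ := ⟨u,v⟩. Then E[(‖Pu‖ − ‖Pv‖)²] ≤ (8(n−d)/(n(n−1)))·(1−ρ). In particular E[(‖Pu‖ − ‖Pv‖)²] ≤ C_{n,d}·(1−⟨u,v⟩)/n with C_{n,d} := 8(n−d)/(n−1) ≤ 8. -/

import Mathlib

open MeasureTheory Matrix

/-- Measurable space structure on real matrices (as a pi type). -/
instance {d n : ℕ} : MeasurableSpace (Matrix (Fin d) (Fin n) ℝ) :=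
  inferInstanceAs (MeasurableSpace (Fin d → Fin n → ℝ))

/-- Euclidean inner product on `m → ℝ`. -/
noncomputable def dotR {m : Type*} [Fintype m] (x y : m → ℝ) : ℝ := ∑ i, x i * y i

/-- Euclidean norm on `m → ℝ`. -/
noncomputable def norR {m : Type*} [Fintype m] (x : m → ℝ) : ℝ := Real.sqrt (dotR x x)

/-- The section-efficiency ratio Γ(P;u,v) = (‖Pu‖‖Pv‖ − ⟨Pu,Pv⟩)/(1 − ⟨u,v⟩). -/
noncomputable def Gam {d n : ℕ} (P : Matrix (Fin d) (Fin n) ℝ) (u v : Fin n → ℝ) : ℝ :=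
  (norR (P.mulVec u) * norR (P.mulVec v) - dotR (P.mulVec u) (P.mulVec v)) / (1 - dotR u v)

/-- `μ` is the Haar–Stiefel distribution: a probability measure supported on the
Stiefel manifold `{P : P Pᵀ = I_d}` that is invariant under right multiplication
by any orthogonal matrix.  (This characterizes the law of the first `d` rows of a
Haar-distributed orthogonal matrix.) -/
def IsHaarStiefel {d n : ℕ} (μ : Measure (Matrix (Fin d) (Fin n) ℝ)) : Prop :=
  IsProbabilityMeasure μ ∧
  (∀ᵐ P ∂μ, P * Pᵀ = 1) ∧
  ∀ Q : Matrix (Fin n) (Fin n) ℝ, Q ∈ Matrix.orthogonalGroup (Fin n) ℝ →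
    μ.map (fun P => P * Q) = μ

namespace HSAux

variable {d n : ℕ}

/-! ### Basic facts about `dotR` and `norR` -/

lemma dotR_self_nonneg {m : Type*} [Fintype m] (x : m → ℝ) : 0 ≤ dotR x x :=
  Finset.sum_nonneg fun i _ => mul_self_nonneg _

lemma eq_zero_of_dotR_self {m : Type*} [Fintype m] {x : m → ℝ} (h : dotR x x = 0) : x = 0 := by
  funext i
  have h0 := (Finset.sum_eq_zero_iff_of_nonneg (fun i _ => mul_self_nonneg (x i))).1 h i
    (Finset.mem_univ i)
  simpa [mul_self_eq_zero] using h0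

lemma norR_nonneg {m : Type*} [Fintype m] (x : m → ℝ) : 0 ≤ norR x := Real.sqrt_nonneg _

lemma sq_norR {m : Type*} [Fintype m] (x : m → ℝ) : norR x ^ 2 = dotR x x :=
  Real.sq_sqrt (dotR_self_nonneg x)

lemma dotR_comm {m : Type*} [Fintype m] (x y : m → ℝ) : dotR x y = dotR y x := by
  simp [dotR, mul_comm]

lemma dotR_cs {m : Type*} [Fintype m] (x y : m → ℝ) :
    (dotR x y) ^ 2 ≤ dotR x x * dotR y y := by
  have := Finset.sum_mul_sq_le_sq_mul_sq Finset.univ x y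
  simpa [dotR, pow_two] using this

lemma dotR_add_left {m : Type*} [Fintype m] (x y z : m → ℝ) :
    dotR (x + y) z = dotR x z + dotR y z := by
  simp [dotR, add_mul, Finset.sum_add_distrib]

lemma dotR_sub_left {m : Type*} [Fintype m] (x y z : m → ℝ) :
    dotR (x - y) z = dotR x z - dotR y z := by
  simp [dotR, sub_mul, Finset.sum_sub_distrib]

lemma dotR_smul_left {m : Type*} [Fintype m] (c : ℝ) (x y : m → ℝ) :
    dotR (c • x) y = c * dotR x y := by
  simp [dotR, Finset.mul_sum, mul_assoc]

lemma dotR_smul_right {m : Type*} [Fintype m] (c : ℝ) (x y : m → ℝ) :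
    dotR x (c • y) = c * dotR x y := by
  rw [dotR_comm, dotR_smul_left, dotR_comm]

lemma dotR_neg {m : Type*} [Fintype m] (x y : m → ℝ) : dotR (-x) (-y) = dotR x y := by
  simp [dotR]

lemma norR_neg {m : Type*} [Fintype m] (x : m → ℝ) : norR (-x) = norR x := by
  unfold norR; rw [dotR_neg]

/-- Expansion of `⟨x+y, x-y⟩`. -/
lemma dotR_add_sub {m : Type*} [Fintype m] (x y : m → ℝ) :
    dotR (x + y) (x - y) = dotR x x - dotR y y := by
  rw [dotR_add_left, dotR_comm x (x - y), dotR_comm y (x - y), dotR_sub_left, dotR_sub_left,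
    dotR_comm y x]
  ring

lemma dotR_sub_sub {m : Type*} [Fintype m] (x y : m → ℝ) :
    dotR (x - y) (x - y) = dotR x x - 2 * dotR x y + dotR y y := by
  rw [dotR_sub_left, dotR_comm x (x - y), dotR_comm y (x - y), dotR_sub_left, dotR_sub_left,
    dotR_comm y x]
  ring

lemma dotR_add_add {m : Type*} [Fintype m] (x y : m → ℝ) :
    dotR (x + y) (x + y) = dotR x x + 2 * dotR x y + dotR y y := by
  rw [dotR_add_left, dotR_comm x (x + y), dotR_comm y (x + y), dotR_add_left, dotR_add_left,
    dotR_comm y x]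
  ring

/-! ### Contraction: `‖Pw‖ ≤ ‖w‖` on the Stiefel manifold -/

lemma dot_mulVec_left {a b : ℕ} (A : Matrix (Fin a) (Fin b) ℝ) (x : Fin b → ℝ) (y : Fin a → ℝ) :
    dotR (A *ᵥ x) y = dotR x (Aᵀ *ᵥ y) := by
  simp only [dotR, Matrix.mulVec, dotProduct, Finset.sum_mul, Finset.mul_sum,
    Matrix.transpose_apply]
  rw [Finset.sum_comm]
  exact Finset.sum_congr rfl fun i _ => Finset.sum_congr rfl fun j _ => by ring

lemma dotR_mulVec_self {a b : ℕ} (A : Matrix (Fin a) (Fin b) ℝ) (x : Fin b → ℝ) :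
    dotR (A *ᵥ x) (A *ᵥ x) = dotR x ((Aᵀ * A) *ᵥ x) := by
  rw [dot_mulVec_left, Matrix.mulVec_mulVec]

lemma contraction {P : Matrix (Fin d) (Fin n) ℝ} (hP : P * Pᵀ = 1) (w : Fin n → ℝ) :
    dotR (P *ᵥ w) (P *ᵥ w) ≤ dotR w w := by
  set M : Matrix (Fin n) (Fin n) ℝ := Pᵀ * P with hM
  have hMM : M * M = M := by
    rw [hM, Matrix.mul_assoc, ← Matrix.mul_assoc P Pᵀ P, hP, Matrix.one_mul]
  have hMt : Mᵀ = M := by rw [hM, Matrix.transpose_mul, Matrix.transpose_transpose]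
  set B : Matrix (Fin n) (Fin n) ℝ := 1 - M with hB
  have hBB : B * B = B := by
    have hexp : (1 - M) * (1 - M) = 1 - M - M + M * M := by noncomm_ring
    rw [hB, hexp, hMM]; abel
  have hBt : Bᵀ = B := by rw [hB, Matrix.transpose_sub, Matrix.transpose_one, hMt]
  have key : dotR w (B *ᵥ w) = dotR (B *ᵥ w) (B *ᵥ w) := by
    rw [dotR_mulVec_self, hBt, hBB]
  have h1 : dotR (P *ᵥ w) (P *ᵥ w) = dotR w (M *ᵥ w) := dotR_mulVec_self P w
  have h2 : dotR w (B *ᵥ w) = dotR w w - dotR w (M *ᵥ w) := by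
    simp [hB, Matrix.sub_mulVec, Matrix.one_mulVec, dotR, mul_sub, Finset.sum_sub_distrib]
  have h3 : 0 ≤ dotR (B *ᵥ w) (B *ᵥ w) := dotR_self_nonneg _
  rw [h1]
  nlinarith [key, h2, h3]

/-! ### Matrices with prescribed orthonormal columns -/

/-- Standard basis vector. -/
def stdb (j : Fin n) : Fin n → ℝ := Pi.single j 1

lemma dotR_stdb (a b : Fin n) : dotR (stdb a) (stdb b) = if a = b then 1 else 0 := by
  rcases eq_or_ne a b with h | h
  · subst h; simp [dotR, stdb, Pi.single_apply]
  · have hz : ∀ i, stdb a i * stdb b i = 0 := by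
      intro i
      rcases eq_or_ne i a with rfl | hia
      · simp [stdb, Pi.single_apply, h]
      · simp [stdb, Pi.single_apply, hia]
    simp [dotR, hz, h]

/-- The square matrix whose `k`-th column is `C k`. -/
def colMat (C : Fin n → Fin n → ℝ) : Matrix (Fin n) (Fin n) ℝ :=
  Matrix.of fun m k => C k m

lemma colMat_mem {C : Fin n → Fin n → ℝ}
    (hC : ∀ k l, dotR (C k) (C l) = if k = l then 1 else 0) :
    colMat C ∈ Matrix.orthogonalGroup (Fin n) ℝ := by
  rw [Matrix.mem_orthogonalGroup_iff']
  ext a b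
  have : ((colMat C)ᵀ * colMat C) a b = dotR (C a) (C b) := by
    simp [Matrix.mul_apply, Matrix.star_eq_conjTranspose, Matrix.conjTranspose_apply, colMat,
      dotR]
  rw [this, hC a b, Matrix.one_apply]

lemma mul_colMat_col (P : Matrix (Fin d) (Fin n) ℝ) (C : Fin n → Fin n → ℝ) (k : Fin n) :
    (P * colMat C) *ᵥ stdb k = P *ᵥ C k := by
  funext i
  simp only [stdb, Matrix.mulVec_single, mul_one]
  simp [Matrix.mul_apply, colMat, Matrix.mulVec, dotProduct]

/-! ### Measurability -/

lemma meas_entry (i : Fin d) (j : Fin n) :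
    Measurable fun P : Matrix (Fin d) (Fin n) ℝ => P i j :=
  (measurable_pi_apply j).comp (measurable_pi_apply i)

lemma meas_mulVec_apply (w : Fin n → ℝ) (i : Fin d) :
    Measurable fun P : Matrix (Fin d) (Fin n) ℝ => (P *ᵥ w) i := by
  have : (fun P : Matrix (Fin d) (Fin n) ℝ => (P *ᵥ w) i)
      = fun P => ∑ j, P i j * w j := by
    funext P; simp [Matrix.mulVec, dotProduct]
  rw [this]
  exact Finset.measurable_sum _ fun j _ => (meas_entry i j).mul_const (w j)

lemma meas_dot (w₁ w₂ : Fin n → ℝ) :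
    Measurable fun P : Matrix (Fin d) (Fin n) ℝ => dotR (P *ᵥ w₁) (P *ᵥ w₂) := by
  simp only [dotR]
  exact Finset.measurable_sum _ fun i _ => (meas_mulVec_apply w₁ i).mul (meas_mulVec_apply w₂ i)

lemma meas_norR (w : Fin n → ℝ) :
    Measurable fun P : Matrix (Fin d) (Fin n) ℝ => norR (P *ᵥ w) :=
  Real.continuous_sqrt.measurable.comp (meas_dot w w)

lemma meas_mulQ (Q : Matrix (Fin n) (Fin n) ℝ) :
    Measurable fun P : Matrix (Fin d) (Fin n) ℝ => P * Q := by
  apply measurable_pi_lambda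
  intro i
  apply measurable_pi_lambda
  intro j
  have : (fun P : Matrix (Fin d) (Fin n) ℝ => (P * Q) i j)
      = fun P => ∑ m, P i m * Q m j := by
    funext P; simp [Matrix.mul_apply]
  rw [this]
  exact Finset.measurable_sum _ fun m _ => (meas_entry i m).mul_const (Q m j)

/-! ### Invariance of integrals -/

lemma integral_rmul {μ : Measure (Matrix (Fin d) (Fin n) ℝ)}
    (hinv : ∀ Q : Matrix (Fin n) (Fin n) ℝ, Q ∈ Matrix.orthogonalGroup (Fin n) ℝ →
      μ.map (fun P => P * Q) = μ)
    {f : Matrix (Fin d) (Fin n) ℝ → ℝ} (hf : Measurable f)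
    {Q : Matrix (Fin n) (Fin n) ℝ} (hQ : Q ∈ Matrix.orthogonalGroup (Fin n) ℝ) :
    ∫ P, f (P * Q) ∂μ = ∫ P, f P ∂μ := by
  have h1 := hinv Q hQ
  have h2 : ∫ y, f y ∂(μ.map (fun P => P * Q)) = ∫ P, f (P * Q) ∂μ :=
    integral_map (meas_mulQ Q).aemeasurable (by rw [h1]; exact hf.aestronglyMeasurable)
  rw [← h2, h1]


/-! ### Gram identities on the Stiefel manifold -/

lemma dot_col (P : Matrix (Fin d) (Fin n) ℝ) (a b : Fin n) :
    dotR (P *ᵥ stdb a) (P *ᵥ stdb b) = ∑ i, P i a * P i b := by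
  simp [dotR, stdb, Matrix.mulVec_single]

lemma sum_sq_gram {P : Matrix (Fin d) (Fin n) ℝ} (hP : P * Pᵀ = 1) (a : Fin n) :
    ∑ j, (∑ i, P i a * P i j) ^ 2 = ∑ i, P i a * P i a := by
  set M : Matrix (Fin n) (Fin n) ℝ := Pᵀ * P with hM
  have hMa : ∀ a b : Fin n, M a b = ∑ i, P i a * P i b := by
    intro a b; simp [hM, Matrix.mul_apply, Matrix.transpose_apply]
  have hMM : M * M = M := by
    rw [hM, Matrix.mul_assoc, ← Matrix.mul_assoc P Pᵀ P, hP, Matrix.one_mul]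
  have hsym : ∀ a b : Fin n, M a b = M b a := by
    intro a b; rw [hMa, hMa]; exact Finset.sum_congr rfl fun i _ => mul_comm _ _
  calc ∑ j, (∑ i, P i a * P i j) ^ 2 = ∑ j, M a j * M j a := by
        refine Finset.sum_congr rfl fun j _ => ?_
        rw [← hMa, sq, hsym a j]
    _ = (M * M) a a := (Matrix.mul_apply).symm
    _ = M a a := by rw [hMM]
    _ = ∑ i, P i a * P i a := hMa a a

lemma trace_gram {P : Matrix (Fin d) (Fin n) ℝ} (hP : P * Pᵀ = 1) :
    ∑ j, dotR (P *ᵥ stdb j) (P *ᵥ stdb j) = (d : ℝ) := by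
  have h1 : ∀ j, dotR (P *ᵥ stdb j) (P *ᵥ stdb j) = (Pᵀ * P) j j := by
    intro j; rw [dot_col]; simp [Matrix.mul_apply, Matrix.transpose_apply]
  calc ∑ j, dotR (P *ᵥ stdb j) (P *ᵥ stdb j) = (Pᵀ * P).trace := by
        rw [Matrix.trace]; exact Finset.sum_congr rfl fun j _ => (h1 j)
    _ = (P * Pᵀ).trace := Matrix.trace_mul_comm _ _
    _ = (d : ℝ) := by rw [hP]; simp [Matrix.trace_one]

/-! ### The ratio functional and its bounds -/

/-- `Hf k0 j P = ⟨P e_{k0}, P e_j⟩² / ‖P e_{k0}‖²`. -/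
noncomputable def Hf (k0 j : Fin n) (P : Matrix (Fin d) (Fin n) ℝ) : ℝ :=
  (dotR (P *ᵥ stdb k0) (P *ᵥ stdb j)) ^ 2 / dotR (P *ᵥ stdb k0) (P *ᵥ stdb k0)

lemma meas_Hf (k0 j : Fin n) : Measurable (Hf (d := d) k0 j) :=
  ((meas_dot _ _).pow_const 2).div (meas_dot _ _)

lemma ratio_bounds {P : Matrix (Fin d) (Fin n) ℝ} (hP : P * Pᵀ = 1)
    {x y : Fin n → ℝ} (hy : dotR y y = 1) :
    0 ≤ (dotR (P *ᵥ x) (P *ᵥ y)) ^ 2 / dotR (P *ᵥ x) (P *ᵥ x) ∧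
    (dotR (P *ᵥ x) (P *ᵥ y)) ^ 2 / dotR (P *ᵥ x) (P *ᵥ x) ≤ 1 := by
  set q := dotR (P *ᵥ x) (P *ᵥ x) with hq
  have hq0 : 0 ≤ q := dotR_self_nonneg _
  have hnum : (dotR (P *ᵥ x) (P *ᵥ y)) ^ 2 ≤ q := by
    have h1 := dotR_cs (P *ᵥ x) (P *ᵥ y)
    have h2 : dotR (P *ᵥ y) (P *ᵥ y) ≤ 1 := by
      have := contraction hP y; rw [hy] at this; exact this
    have h3 : 0 ≤ dotR (P *ᵥ y) (P *ᵥ y) := dotR_self_nonneg _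
    nlinarith
  constructor
  · exact div_nonneg (sq_nonneg _) hq0
  · rcases hq0.eq_or_lt with h | h
    · have : (dotR (P *ᵥ x) (P *ᵥ y)) ^ 2 = 0 := le_antisymm (by rw [← h] at hnum; exact hnum) (sq_nonneg _)
      rw [this]; simp
    · exact (div_le_one h).mpr hnum

lemma Hf_bounds {P : Matrix (Fin d) (Fin n) ℝ} (hP : P * Pᵀ = 1) (k0 j : Fin n) :
    0 ≤ Hf k0 j P ∧ Hf k0 j P ≤ 1 := by
  have := ratio_bounds hP (x := stdb k0) (y := stdb j) (by rw [dotR_stdb]; simp)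
  exact this

lemma sum_Hf_le {P : Matrix (Fin d) (Fin n) ℝ} (hP : P * Pᵀ = 1) (k0 : Fin n) :
    ∑ j ∈ Finset.univ.erase k0, Hf k0 j P ≤
      1 - dotR (P *ᵥ stdb k0) (P *ᵥ stdb k0) := by
  set q := dotR (P *ᵥ stdb k0) (P *ᵥ stdb k0) with hqdef
  have hq0 : 0 ≤ q := dotR_self_nonneg _
  have hqle : q ≤ 1 := by
    have := contraction hP (stdb k0)
    rw [dotR_stdb] at this; simpa using this
  rcases hq0.eq_or_lt with h | h
  · have hz : dotR (P *ᵥ stdb k0) (P *ᵥ stdb k0) = 0 := h.symm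
    have : ∀ j, Hf k0 j P = 0 := by intro j; rw [Hf, hz, div_zero]
    rw [Finset.sum_congr rfl (fun j _ => this j)]
    simp
    linarith [hz ▸ (le_refl (0:ℝ))]
  · have hsumall : ∑ j, (dotR (P *ᵥ stdb k0) (P *ᵥ stdb j)) ^ 2 = q := by
      calc ∑ j, (dotR (P *ᵥ stdb k0) (P *ᵥ stdb j)) ^ 2
          = ∑ j, (∑ i, P i k0 * P i j) ^ 2 :=
            Finset.sum_congr rfl fun j _ => by rw [dot_col]
        _ = ∑ i, P i k0 * P i k0 := sum_sq_gram hP k0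
        _ = q := by rw [hqdef, dot_col]
    have hsum_erase : ∑ j ∈ Finset.univ.erase k0, (dotR (P *ᵥ stdb k0) (P *ᵥ stdb j)) ^ 2
        = q - q ^ 2 := by
      rw [Finset.sum_erase_eq_sub (Finset.mem_univ k0), hsumall, ← hqdef, sq]
    have : ∑ j ∈ Finset.univ.erase k0, Hf k0 j P = (q - q ^ 2) / q := by
      rw [← hsum_erase, Finset.sum_div]
      exact Finset.sum_congr rfl fun j _ => rfl
    rw [this]
    have : (q - q ^ 2) / q = 1 - q := by field_simp
    rw [this]

/-! ### Integrability -/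

lemma integrable_of_bound {μ : Measure (Matrix (Fin d) (Fin n) ℝ)} [IsProbabilityMeasure μ]
    {f : Matrix (Fin d) (Fin n) ℝ → ℝ} (hf : Measurable f)
    (hb : ∀ᵐ P ∂μ, |f P| ≤ 1) : Integrable f μ :=
  Integrable.mono' (integrable_const 1) hf.aestronglyMeasurable
    (by simpa [Real.norm_eq_abs] using hb)

/-! ### The key moment bound -/

lemma key_moment {μ : Measure (Matrix (Fin d) (Fin n) ℝ)}
    (hd : 0 < d) (hdn : d < n)
    (hprob : IsProbabilityMeasure μ) (hsupp : ∀ᵐ P ∂μ, P * Pᵀ = 1)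
    (hinv : ∀ Q : Matrix (Fin n) (Fin n) ℝ, Q ∈ Matrix.orthogonalGroup (Fin n) ℝ →
      μ.map (fun P => P * Q) = μ)
    (k0 k1 : Fin n) (hk : k0 ≠ k1) :
    ∫ P, Hf k0 k1 P ∂μ ≤ ((n : ℝ) - d) / (n * (n - 1)) := by
  haveI := hprob
  have hn2 : 2 ≤ n := by omega
  -- integrability of the Hf's
  have hIntH : ∀ j, Integrable (Hf (d := d) k0 j) μ := by
    intro j
    refine integrable_of_bound (meas_Hf k0 j) ?_
    filter_upwards [hsupp] with P hP
    have := Hf_bounds hP k0 j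
    rw [abs_of_nonneg this.1]; exact this.2
  -- the diagonal Gram functions
  set Gf : Fin n → Matrix (Fin d) (Fin n) ℝ → ℝ :=
    fun j P => dotR (P *ᵥ stdb j) (P *ᵥ stdb j) with hGf
  have hmeasG : ∀ j, Measurable (Gf j) := fun j => meas_dot _ _
  have hGb : ∀ᵐ P ∂μ, ∀ j, 0 ≤ Gf j P ∧ Gf j P ≤ 1 := by
    filter_upwards [hsupp] with P hP
    intro j
    refine ⟨dotR_self_nonneg _, ?_⟩
    have := contraction hP (stdb j)
    rw [dotR_stdb] at this; simpa using this
  have hIntG : ∀ j, Integrable (Gf j) μ := by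
    intro j
    refine integrable_of_bound (hmeasG j) ?_
    filter_upwards [hGb] with P hP
    rw [abs_of_nonneg (hP j).1]; exact (hP j).2
  -- swap invariance for Gf
  have hGswap : ∀ j : Fin n, ∫ P, Gf j P ∂μ = ∫ P, Gf k0 P ∂μ := by
    intro j
    set σ := Equiv.swap k0 j with hσ
    set C : Fin n → Fin n → ℝ := fun k => stdb (σ k) with hC
    have hCorth : ∀ k l, dotR (C k) (C l) = if k = l then 1 else 0 := by
      intro k l; rw [hC]; rw [dotR_stdb]
      simp [EmbeddingLike.apply_eq_iff_eq]
    have hmem := colMat_mem hCorth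
    have hcomp : ∀ P : Matrix (Fin d) (Fin n) ℝ, Gf k0 (P * colMat C) = Gf j P := by
      intro P
      rw [hGf]
      simp only []
      rw [mul_colMat_col, hC]
      simp only []
      rw [show σ k0 = j from Equiv.swap_apply_left k0 j]
    calc ∫ P, Gf j P ∂μ = ∫ P, Gf k0 (P * colMat C) ∂μ := by
          exact (integral_congr_ae (Filter.Eventually.of_forall fun P => (hcomp P).symm))
      _ = ∫ P, Gf k0 P ∂μ := integral_rmul hinv (hmeasG k0) hmem
  -- total mass: ∑ j ∫ Gf j = d
  have hGsum : (n : ℝ) * ∫ P, Gf k0 P ∂μ = (d : ℝ) := by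
    have h1 : ∑ j : Fin n, ∫ P, Gf j P ∂μ = ∫ P, ∑ j : Fin n, Gf j P ∂μ :=
      (integral_finset_sum Finset.univ fun j _ => hIntG j).symm
    have h2 : ∫ P, ∑ j : Fin n, Gf j P ∂μ = (d : ℝ) := by
      have : (fun P => ∑ j : Fin n, Gf j P) =ᵐ[μ] fun _ => (d : ℝ) := by
        filter_upwards [hsupp] with P hP
        exact trace_gram hP
      rw [integral_congr_ae this]
      simp [measure_univ]
    have h3 : ∑ j : Fin n, ∫ P, Gf j P ∂μ = (n : ℝ) * ∫ P, Gf k0 P ∂μ := by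
      rw [Finset.sum_congr rfl fun j _ => hGswap j]
      simp [Finset.card_univ, mul_comm]
    rw [← h3, h1, h2]
  -- swap invariance for Hf
  have hHswap : ∀ j ∈ Finset.univ.erase k0, ∫ P, Hf k0 j P ∂μ = ∫ P, Hf k0 k1 P ∂μ := by
    intro j hj
    have hjne : j ≠ k0 := Finset.ne_of_mem_erase hj
    set σ := Equiv.swap k1 j with hσ
    set C : Fin n → Fin n → ℝ := fun k => stdb (σ k) with hC
    have hCorth : ∀ k l, dotR (C k) (C l) = if k = l then 1 else 0 := by
      intro k l; rw [hC]; rw [dotR_stdb]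
      simp [EmbeddingLike.apply_eq_iff_eq]
    have hmem := colMat_mem hCorth
    have hσ0 : σ k0 = k0 := Equiv.swap_apply_of_ne_of_ne hk hjne.symm
    have hσ1 : σ k1 = j := Equiv.swap_apply_left k1 j
    have hcomp : ∀ P : Matrix (Fin d) (Fin n) ℝ, Hf k0 k1 (P * colMat C) = Hf k0 j P := by
      intro P
      rw [Hf, Hf, mul_colMat_col, mul_colMat_col, hC]
      simp only []
      rw [hσ0, hσ1]
    calc ∫ P, Hf k0 j P ∂μ = ∫ P, Hf k0 k1 (P * colMat C) ∂μ :=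
          integral_congr_ae (Filter.Eventually.of_forall fun P => (hcomp P).symm)
      _ = ∫ P, Hf k0 k1 P ∂μ := integral_rmul hinv (meas_Hf k0 k1) hmem
  -- sum of the Hf's
  have hsum_le : ∫ P, ∑ j ∈ Finset.univ.erase k0, Hf k0 j P ∂μ ≤ 1 - (d : ℝ) / n := by
    have hintsum : Integrable (fun P => ∑ j ∈ Finset.univ.erase k0, Hf k0 j P) μ :=
      MeasureTheory.integrable_finset_sum _ fun j _ => hIntH j
    have hintub : Integrable (fun P => 1 - Gf k0 P) μ :=
      (integrable_const (1:ℝ)).sub (hIntG k0)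
    have hle : (fun P => ∑ j ∈ Finset.univ.erase k0, Hf k0 j P) ≤ᵐ[μ]
        fun P => 1 - Gf k0 P := by
      filter_upwards [hsupp] with P hP
      exact sum_Hf_le hP k0
    have h4 := integral_mono_ae hintsum hintub hle
    have h5 : ∫ P, (1 - Gf k0 P) ∂μ = 1 - (d : ℝ) / n := by
      rw [integral_sub (integrable_const 1) (hIntG k0)]
      have hn0 : (n : ℝ) ≠ 0 := by positivity
      have : ∫ P, Gf k0 P ∂μ = (d : ℝ) / n := by
        field_simp
        linarith [hGsum]
      rw [this]
      simp [measure_univ]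
    rw [h5] at h4
    exact h4
  -- put it together
  have hcard : (Finset.univ.erase k0).card = n - 1 := by
    rw [Finset.card_erase_of_mem (Finset.mem_univ k0), Finset.card_univ, Fintype.card_fin]
  have hmain : ((n : ℝ) - 1) * ∫ P, Hf k0 k1 P ∂μ ≤ 1 - (d : ℝ) / n := by
    have h6 : ∑ j ∈ Finset.univ.erase k0, ∫ P, Hf k0 j P ∂μ
        = ((n : ℝ) - 1) * ∫ P, Hf k0 k1 P ∂μ := by
      rw [Finset.sum_congr rfl hHswap, Finset.sum_const, hcard, nsmul_eq_mul]
      congr 1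
      have : ((n - 1 : ℕ) : ℝ) = (n : ℝ) - 1 := by
        rw [Nat.cast_sub (by omega : 1 ≤ n)]; simp
      rw [this]
    rw [← h6, ← integral_finset_sum _ fun j _ => hIntH j]
    exact hsum_le
  have hn1 : (0:ℝ) < (n : ℝ) - 1 := by
    have : (2:ℝ) ≤ (n:ℝ) := by exact_mod_cast hn2
    linarith
  have hn0 : (0:ℝ) < (n : ℝ) := by positivity
  have heq : (1 - (d : ℝ) / n) / ((n : ℝ) - 1) = ((n : ℝ) - d) / (n * (n - 1)) := by
    field_simp
  rw [← heq]
  rw [le_div_iff₀ hn1]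
  linarith [hmain]


/-! ### Reduction of an arbitrary orthonormal pair to coordinates -/

lemma inner_eq_dotR {n : ℕ} (x y : EuclideanSpace ℝ (Fin n)) :
    (inner ℝ x y : ℝ) = dotR (fun i => x i) (fun i => y i) := by
  simp [PiLp.inner_apply, RCLike.inner_apply, starRingEnd_apply, dotR, mul_comm]

lemma key_ratio {μ : Measure (Matrix (Fin d) (Fin n) ℝ)}
    (hd : 0 < d) (hdn : d < n)
    (hprob : IsProbabilityMeasure μ) (hsupp : ∀ᵐ P ∂μ, P * Pᵀ = 1)
    (hinv : ∀ Q : Matrix (Fin n) (Fin n) ℝ, Q ∈ Matrix.orthogonalGroup (Fin n) ℝ →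
      μ.map (fun P => P * Q) = μ)
    (x y : Fin n → ℝ) (hx : dotR x x = 1) (hy : dotR y y = 1) (hxy : dotR x y = 0) :
    ∫ P, (dotR (P *ᵥ x) (P *ᵥ y)) ^ 2 / dotR (P *ᵥ x) (P *ᵥ x) ∂μ ≤
      ((n : ℝ) - d) / (n * (n - 1)) := by
  have hn2 : 2 ≤ n := by omega
  set k0 : Fin n := ⟨0, by omega⟩ with hk0
  set k1 : Fin n := ⟨1, by omega⟩ with hk1
  have hk : k0 ≠ k1 := by
    intro h
    have := congrArg Fin.val h
    simp [hk0, hk1] at this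
  -- extend {x, y} to an orthonormal basis
  set xE : EuclideanSpace ℝ (Fin n) := WithLp.toLp 2 x with hxE
  set yE : EuclideanSpace ℝ (Fin n) := WithLp.toLp 2 y with hyE
  set vE : Fin n → EuclideanSpace ℝ (Fin n) := fun i => if i = k0 then xE else yE with hvE
  set sE : Set (Fin n) := {k0, k1} with hsE
  have hcard : Module.finrank ℝ (EuclideanSpace ℝ (Fin n)) = Fintype.card (Fin n) := by
    rw [finrank_euclideanSpace_fin, Fintype.card_fin]
  have horth : Orthonormal ℝ (sE.restrict vE) := by
    rw [orthonormal_iff_ite]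
    rintro ⟨a, ha⟩ ⟨b, hb⟩
    have ha' : a = k0 ∨ a = k1 := by simpa [hsE] using ha
    have hb' : b = k0 ∨ b = k1 := by simpa [hsE] using hb
    have hyx : dotR y x = 0 := by rw [dotR_comm]; exact hxy
    rcases ha' with rfl | rfl <;> rcases hb' with rfl | rfl <;>
      simp [Set.restrict, hvE, hk, hk.symm, Subtype.mk_eq_mk, inner_eq_dotR, hxE, hyE,
        hx, hy, hxy, hyx] <;>
      simp_all [dotR, EuclideanSpace.norm_eq, ← sq]
  obtain ⟨b, hb⟩ := horth.exists_orthonormalBasis_extension_of_card_eq hcard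
  set C : Fin n → Fin n → ℝ := fun k i => b k i with hC
  have hCorth : ∀ k l, dotR (C k) (C l) = if k = l then 1 else 0 := by
    intro k l
    have h1 := (orthonormal_iff_ite.mp b.orthonormal) k l
    rw [inner_eq_dotR] at h1
    exact h1
  have hmem := colMat_mem hCorth
  have hC0 : C k0 = x := by
    have h1 : b k0 = vE k0 := hb k0 (by simp [hsE])
    have h2 : vE k0 = xE := by simp [hvE]
    funext i
    exact congrFun (congrArg (fun (z : EuclideanSpace ℝ (Fin n)) => (z : Fin n → ℝ))
      (h1.trans h2)) i
  have hC1 : C k1 = y := by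
    have h1 : b k1 = vE k1 := hb k1 (by simp [hsE])
    have h2 : vE k1 = yE := by simp [hvE, hk.symm]
    funext i
    exact congrFun (congrArg (fun (z : EuclideanSpace ℝ (Fin n)) => (z : Fin n → ℝ))
      (h1.trans h2)) i
  have hcomp : ∀ P : Matrix (Fin d) (Fin n) ℝ,
      Hf k0 k1 (P * colMat C) =
        (dotR (P *ᵥ x) (P *ᵥ y)) ^ 2 / dotR (P *ᵥ x) (P *ᵥ x) := by
    intro P
    rw [Hf, mul_colMat_col, mul_colMat_col, hC0, hC1]
  have h7 : ∫ P, (dotR (P *ᵥ x) (P *ᵥ y)) ^ 2 / dotR (P *ᵥ x) (P *ᵥ x) ∂μ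
      = ∫ P, Hf k0 k1 P ∂μ := by
    rw [← integral_rmul hinv (meas_Hf k0 k1) hmem]
    exact integral_congr_ae (Filter.Eventually.of_forall fun P => (hcomp P).symm)
  rw [h7]
  exact key_moment hd hdn hprob hsupp hinv k0 k1 hk

/-! ### The pointwise inequality -/

lemma pointwise_bound (P : Matrix (Fin d) (Fin n) ℝ) (u v : Fin n → ℝ)
    (h1 : dotR u v < 1) (h2 : -1 < dotR u v) :
    (norR (P *ᵥ u) - norR (P *ᵥ v)) ^ 2 ≤
      (4 - 4 * dotR u v) *
        ((dotR (P *ᵥ ((Real.sqrt (2 + 2 * dotR u v))⁻¹ • (u + v)))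
               (P *ᵥ ((Real.sqrt (2 - 2 * dotR u v))⁻¹ • (u - v)))) ^ 2 /
          dotR (P *ᵥ ((Real.sqrt (2 + 2 * dotR u v))⁻¹ • (u + v)))
               (P *ᵥ ((Real.sqrt (2 + 2 * dotR u v))⁻¹ • (u + v)))) := by
  set ρ := dotR u v with hρ
  have hz : (0:ℝ) < 2 + 2 * ρ := by linarith
  have hz' : (0:ℝ) < 2 - 2 * ρ := by linarith
  set c : ℝ := (Real.sqrt (2 + 2 * ρ))⁻¹ with hc
  set c' : ℝ := (Real.sqrt (2 - 2 * ρ))⁻¹ with hc'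
  have hc2 : c ^ 2 = (2 + 2 * ρ)⁻¹ := by
    rw [hc, inv_pow, Real.sq_sqrt hz.le]
  have hc'2 : c' ^ 2 = (2 - 2 * ρ)⁻¹ := by
    rw [hc', inv_pow, Real.sq_sqrt hz'.le]
  set S : Fin d → ℝ := P *ᵥ (u + v) with hS
  set T : Fin d → ℝ := P *ᵥ (u - v) with hT
  have hPcS : P *ᵥ (c • (u + v)) = c • S := by rw [Matrix.mulVec_smul, hS]
  have hPcT : P *ᵥ (c' • (u - v)) = c' • T := by rw [Matrix.mulVec_smul, hT]
  rw [hPcS, hPcT]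
  rw [dotR_smul_left, dotR_smul_right, dotR_smul_left, dotR_smul_right]
  set a : ℝ := norR (P *ᵥ u) with ha
  set b : ℝ := norR (P *ᵥ v) with hbb
  have ha0 : 0 ≤ a := norR_nonneg _
  have hb0 : 0 ≤ b := norR_nonneg _
  have ha2 : a ^ 2 = dotR (P *ᵥ u) (P *ᵥ u) := sq_norR _
  have hb2 : b ^ 2 = dotR (P *ᵥ v) (P *ᵥ v) := sq_norR _
  have hST : dotR S T = a ^ 2 - b ^ 2 := by
    rw [hS, hT, Matrix.mulVec_add, Matrix.mulVec_sub, dotR_add_sub, ha2, hb2]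
  have hSS : dotR S S = a ^ 2 + 2 * dotR (P *ᵥ u) (P *ᵥ v) + b ^ 2 := by
    rw [hS, Matrix.mulVec_add, dotR_add_add, ha2, hb2]
  have hTT : dotR T T = a ^ 2 - 2 * dotR (P *ᵥ u) (P *ᵥ v) + b ^ 2 := by
    rw [hT, Matrix.mulVec_sub, dotR_sub_sub, ha2, hb2]
  have hTT0 : 0 ≤ dotR T T := dotR_self_nonneg _
  have hSSle : dotR S S ≤ 2 * (a ^ 2 + b ^ 2) := by
    rw [hSS]; rw [hTT] at hTT0; linarith
  have hSS0 : 0 ≤ dotR S S := dotR_self_nonneg _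
  rcases hSS0.eq_or_lt with hS0 | hS0
  · -- degenerate: P(u+v) = 0, so ‖Pu‖ = ‖Pv‖
    have hSzero : S = 0 := eq_zero_of_dotR_self hS0.symm
    have hPuv : P *ᵥ u = -(P *ᵥ v) := by
      have : P *ᵥ u + P *ᵥ v = 0 := by rw [← Matrix.mulVec_add, ← hS, hSzero]
      linear_combination (norm := abel) this
    have hab : a = b := by rw [ha, hPuv, norR_neg, ← hbb]
    have hdz : dotR S T = 0 := by rw [hSzero]; simp [dotR]
    rw [hab, hdz, ← hS0]
    simp
  · have hSSne : dotR S S ≠ 0 := ne_of_gt hS0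
    have hrhs : (4 - 4 * ρ) * ((c * (c' * dotR S T)) ^ 2 / (c * (c * dotR S S)))
        = 2 * (dotR S T) ^ 2 / dotR S S := by
      have e1 : (c * (c' * dotR S T)) ^ 2 = c ^ 2 * c' ^ 2 * (dotR S T) ^ 2 := by ring
      have e2 : c * (c * dotR S S) = c ^ 2 * dotR S S := by ring
      have h2z : (2 + 2 * ρ) ≠ 0 := hz.ne'
      have h2z' : (2 - 2 * ρ) ≠ 0 := hz'.ne'
      rw [e1, e2, hc2, hc'2]
      rw [mul_div_assoc', div_eq_div_iff (mul_ne_zero (inv_ne_zero h2z) hSSne) hSSne]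
      have hb : (2 - 2 * ρ)⁻¹ * (2 - 2 * ρ) = 1 := inv_mul_cancel₀ h2z'
      linear_combination 2 * (2 + 2 * ρ)⁻¹ * dotR S T ^ 2 * dotR S S * hb
    rw [hrhs, le_div_iff₀ hS0, hST]
    nlinarith [mul_le_mul_of_nonneg_left hSSle (sq_nonneg (a - b)),
      mul_nonneg (mul_nonneg ha0 hb0) (sq_nonneg (a - b)), sq_nonneg (a - b), sq_nonneg (a + b)]

end HSAux

open HSAux

set_option maxHeartbeats 1000000 in
/-- `E[(‖Pu‖ − ‖Pv‖)²] ≤ (8(n−d)/(n(n−1)))(1−ρ)` for Haar–Stiefel `P`, `3 ≤ d < n`,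
unit vectors `u, v`, and in particular
`E[(‖Pu‖ − ‖Pv‖)²] ≤ C_{n,d}(1−⟨u,v⟩)/n` with `C_{n,d} = 8(n−d)/(n−1) ≤ 8`. -/
theorem norm_difference_second_moment {n d : ℕ} (hd3 : 3 ≤ d) (hdn : d < n)
    (μ : Measure (Matrix (Fin d) (Fin n) ℝ)) (hμ : IsHaarStiefel μ)
    (u v : Fin n → ℝ) (hu : dotR u u = 1) (hv : dotR v v = 1) :
    (∫ P, (norR (P.mulVec u) - norR (P.mulVec v)) ^ 2 ∂μ ≤
        (8 * ((n : ℝ) - d) / (n * (n - 1))) * (1 - dotR u v)) ∧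
    (∫ P, (norR (P.mulVec u) - norR (P.mulVec v)) ^ 2 ∂μ ≤
        (8 * ((n : ℝ) - d) / ((n : ℝ) - 1)) * (1 - dotR u v) / n) ∧
    8 * ((n : ℝ) - d) / ((n : ℝ) - 1) ≤ 8 := by
  obtain ⟨hprob, hsupp, hinv⟩ := hμ
  haveI := hprob
  have hd0 : 0 < d := by omega
  have hn4 : 4 ≤ n := by omega
  have hnR : (4:ℝ) ≤ (n:ℝ) := by exact_mod_cast hn4
  have hn0 : (0:ℝ) < (n:ℝ) := by linarith
  have hn1 : (0:ℝ) < (n:ℝ) - 1 := by linarith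
  have hdR : (d:ℝ) < (n:ℝ) := by exact_mod_cast hdn
  have hd1 : (1:ℝ) ≤ (d:ℝ) := by exact_mod_cast (by omega : 1 ≤ d)
  set ρ : ℝ := dotR u v with hρ
  have third : 8 * ((n : ℝ) - d) / ((n : ℝ) - 1) ≤ 8 := by
    rw [div_le_iff₀ hn1]; linarith
  have h12 : 8 * ((n : ℝ) - d) / ((n : ℝ) - 1) * (1 - ρ) / n
      = 8 * ((n : ℝ) - d) / (n * (n - 1)) * (1 - ρ) := by
    rw [div_mul_eq_mul_div, div_div, div_mul_eq_mul_div, mul_comm ((n:ℝ)-1) (n:ℝ)]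
  have hcs : ρ ^ 2 ≤ 1 := by
    have := dotR_cs u v; rw [hu, hv, ← hρ] at this; simpa using this
  have hρle : ρ ≤ 1 := by nlinarith
  have hρge : -1 ≤ ρ := by nlinarith
  have coefpos : 0 ≤ 8 * ((n : ℝ) - d) / (n * (n - 1)) := by
    apply div_nonneg (by linarith) (by nlinarith)
  have main : ∫ P, (norR (P.mulVec u) - norR (P.mulVec v)) ^ 2 ∂μ ≤
      8 * ((n : ℝ) - d) / (n * (n - 1)) * (1 - ρ) := by
    rcases eq_or_lt_of_le hρle with h1 | h1
    · -- ρ = 1, hence u = v and the integrand vanishes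
      have h0 : dotR (u - v) (u - v) = 0 := by
        rw [dotR_sub_sub, hu, hv, ← hρ, h1]; ring
      have huv : u = v := sub_eq_zero.mp (eq_zero_of_dotR_self h0)
      rw [huv]
      simp only [sub_self, ne_eq, OfNat.ofNat_ne_zero, not_false_eq_true, zero_pow,
        integral_zero]
      rw [h1]
      simp
    rcases eq_or_lt_of_le hρge with h2 | h2
    · -- ρ = -1, hence u = -v and the integrand vanishes
      have h0 : dotR (u + v) (u + v) = 0 := by
        rw [dotR_add_add, hu, hv, ← hρ, ← h2]; ring
      have huv : u = -v := eq_neg_of_add_eq_zero_left (eq_zero_of_dotR_self h0)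
      have hzero : ∀ P : Matrix (Fin d) (Fin n) ℝ,
          (norR (P.mulVec u) - norR (P.mulVec v)) ^ 2 = 0 := by
        intro P
        rw [huv, Matrix.mulVec_neg, norR_neg, sub_self]
        simp
      rw [integral_congr_ae (Filter.Eventually.of_forall hzero), integral_zero]
      apply mul_nonneg coefpos
      rw [← h2]; norm_num
    · -- main case: -1 < ρ < 1
      set x : Fin n → ℝ := (Real.sqrt (2 + 2 * dotR u v))⁻¹ • (u + v) with hxdef
      set y : Fin n → ℝ := (Real.sqrt (2 - 2 * dotR u v))⁻¹ • (u - v) with hydef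
      have hz : (0:ℝ) < 2 + 2 * ρ := by linarith
      have hz' : (0:ℝ) < 2 - 2 * ρ := by linarith
      have hc2 : ((Real.sqrt (2 + 2 * dotR u v))⁻¹) ^ 2 = (2 + 2 * ρ)⁻¹ := by
        rw [inv_pow, ← hρ, Real.sq_sqrt (by linarith)]
      have hc'2 : ((Real.sqrt (2 - 2 * dotR u v))⁻¹) ^ 2 = (2 - 2 * ρ)⁻¹ := by
        rw [inv_pow, ← hρ, Real.sq_sqrt (by linarith)]
      have hxx : dotR x x = 1 := by
        rw [hxdef, dotR_smul_left, dotR_smul_right, dotR_add_add, hu, hv, ← hρ, ← mul_assoc,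
          ← sq, hc2]
        rw [inv_mul_eq_one₀ (by linarith)]
        ring
      have hyy : dotR y y = 1 := by
        rw [hydef, dotR_smul_left, dotR_smul_right, dotR_sub_sub, hu, hv, ← hρ, ← mul_assoc,
          ← sq, hc'2]
        rw [inv_mul_eq_one₀ (by linarith)]
        ring
      have hxy : dotR x y = 0 := by
        rw [hxdef, hydef, dotR_smul_left, dotR_smul_right, dotR_add_sub, hu, hv]
        ring
      -- integrability of the left-hand side
      have hmeasL : Measurable fun P : Matrix (Fin d) (Fin n) ℝ =>
          (norR (P *ᵥ u) - norR (P *ᵥ v)) ^ 2 :=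
        ((meas_norR u).sub (meas_norR v)).pow_const 2
      have hIntL : Integrable
          (fun P : Matrix (Fin d) (Fin n) ℝ => (norR (P *ᵥ u) - norR (P *ᵥ v)) ^ 2) μ := by
        refine integrable_of_bound hmeasL ?_
        filter_upwards [hsupp] with P hP
        have hau : dotR (P *ᵥ u) (P *ᵥ u) ≤ 1 := by
          have := contraction hP u; rw [hu] at this; exact this
        have hav : dotR (P *ᵥ v) (P *ᵥ v) ≤ 1 := by
          have := contraction hP v; rw [hv] at this; exact this
        have h1a : norR (P *ᵥ u) ≤ 1 := by
          nlinarith [sq_norR (P *ᵥ u), norR_nonneg (P *ᵥ u)]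
        have h1b : norR (P *ᵥ v) ≤ 1 := by
          nlinarith [sq_norR (P *ᵥ v), norR_nonneg (P *ᵥ v)]
        rw [abs_of_nonneg (sq_nonneg _)]
        nlinarith [norR_nonneg (P *ᵥ u), norR_nonneg (P *ᵥ v)]
      -- the ratio functional
      set R : Matrix (Fin d) (Fin n) ℝ → ℝ :=
        fun P => (dotR (P *ᵥ x) (P *ᵥ y)) ^ 2 / dotR (P *ᵥ x) (P *ᵥ x) with hRdef
      have hmeasR : Measurable R := ((meas_dot x y).pow_const 2).div (meas_dot x x)
      have hIntR : Integrable R μ := by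
        refine integrable_of_bound hmeasR ?_
        filter_upwards [hsupp] with P hP
        have := ratio_bounds hP (x := x) (y := y) hyy
        rw [hRdef, abs_of_nonneg this.1]; exact this.2
      have hIntR2 : Integrable (fun P => (4 - 4 * ρ) * R P) μ := hIntR.const_mul _
      have hpt : ∀ P : Matrix (Fin d) (Fin n) ℝ,
          (norR (P *ᵥ u) - norR (P *ᵥ v)) ^ 2 ≤ (4 - 4 * ρ) * R P := by
        intro P
        exact pointwise_bound P u v h1 h2
      have hkey := key_ratio hd0 hdn hprob hsupp hinv x y hxx hyy hxy
      calc ∫ P, (norR (P *ᵥ u) - norR (P *ᵥ v)) ^ 2 ∂μ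
          ≤ ∫ P, (4 - 4 * ρ) * R P ∂μ := integral_mono hIntL hIntR2 hpt
        _ = (4 - 4 * ρ) * ∫ P, R P ∂μ := integral_const_mul _ _
        _ ≤ (4 - 4 * ρ) * (((n : ℝ) - d) / (n * (n - 1))) := by
            apply mul_le_mul_of_nonneg_left _ (by linarith)
            exact hkey
        _ ≤ 8 * ((n : ℝ) - d) / (n * (n - 1)) * (1 - ρ) := by
            have hK : (0:ℝ) ≤ ((n : ℝ) - d) / (n * (n - 1)) := by
              apply div_nonneg (by linarith) (by nlinarith)
            have he : 8 * ((n : ℝ) - d) / (n * (n - 1)) * (1 - ρ)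
                = 8 * (((n : ℝ) - d) / (n * (n - 1))) * (1 - ρ) := by ring
            rw [he]
            nlinarith [hK, h1]
  exact ⟨main, by rw [h12]; exact main, third⟩
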